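/- Let A be a commutative ring, J₁,…,J_ℓ ∈ A, and I = (J₁,…,J_ℓ). If the Koszul complex K(A; J₁,…,J_ℓ) is a resolution of A/I (i.e. acyclic in positive degrees with H₀ = A/I), then the images [J₁],…,[J_ℓ] form a free basis of the A/I-module I/I²; that is, whenever f₁,…,f_ℓ ∈ A satisfy Σ_a f_a J_a ∈ I², all f_a lie in I, and the [J_a] generate I/I². -/

import Mathlib

open scoped BigOperators

/-- Coordinate description of the degree-`k` part of the Koszul complex on `ℓ`
generators: an alternating `A`-valued tensor in `k` indices from `Fin ℓ`. -/
def IsAltTensor {A : Type*} [CommRing A] (ℓ k : ℕ)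
    (F : (Fin k → Fin ℓ) → A) : Prop :=
  (∀ v : Fin k → Fin ℓ, ¬ Function.Injective v → F v = 0) ∧
  (∀ (v : Fin k → Fin ℓ) (σ : Equiv.Perm (Fin k)),
    F (v ∘ σ) = (Equiv.Perm.sign σ : ℤ) • F v)

/-- **Freeness of the conormal module for a Koszul-regular sequence.**
Let `A` be a commutative ring, `J₁, …, J_ℓ ∈ A` and `I = (J₁, …, J_ℓ)`.  If the Koszul
complex `K(A; J₁, …, J_ℓ)` is a resolution of `A/I`, i.e. is acyclic in positive degrees
(every alternating cycle for the Koszul differential `∂(e_b) = J_b` is a boundary of an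
alternating tensor; `H₀ = A/I` holds automatically), then the images `[J₁], …, [J_ℓ]`
form a free basis of the `A/I`-module `I/I²`: whenever `f₁, …, f_ℓ ∈ A` satisfy
`∑ f_a J_a ∈ I²` then all `f_a ∈ I`, and every element of `I` is an `A`-linear
combination of the `J_a` (so the `[J_a]` generate `I/I²`). -/
theorem koszul_resolution_conormal_free
    (A : Type*) [CommRing A] (ℓ : ℕ) (J : Fin ℓ → A)
    (I : Ideal A) (hI : I = Ideal.span (Set.range J))
    -- acyclicity of the Koszul complex in positive degrees
    (hacyclic : ∀ (k : ℕ) (F : (Fin (k + 1) → Fin ℓ) → A), IsAltTensor ℓ (k + 1) F →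
      (∀ v : Fin k → Fin ℓ, ∑ b, J b * F (Fin.cons b v) = 0) →
      ∃ G : (Fin (k + 2) → Fin ℓ) → A, IsAltTensor ℓ (k + 2) G ∧
        ∀ v : Fin (k + 1) → Fin ℓ, F v = ∑ b, J b * G (Fin.cons b v)) :
    -- freeness: `∑ f_a J_a ∈ I²` forces all `f_a ∈ I`
    (∀ f : Fin ℓ → A, (∑ a, f a * J a) ∈ I ^ 2 → ∀ a, f a ∈ I)
    ∧
    -- generation: the classes `[J_a]` generate `I/I²`
    (∀ x ∈ I, ∃ g : Fin ℓ → A, x = ∑ a, g a * J a) := by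
  subst hI
  set I := Ideal.span (Set.range J) with hIdef
  have hJmem : ∀ b, J b ∈ I := fun b => Ideal.subset_span ⟨b, rfl⟩
  constructor
  · intro f hf a
    obtain ⟨d, hd⟩ : ∃ d : Fin ℓ → Fin ℓ → A,
        (∑ a, f a * J a) = ∑ a, ∑ b, d a b * J b * J a := by
      rw [pow_two] at hf
      refine Submodule.mul_induction_on hf ?_ ?_
      · intro p hp q hq
        obtain ⟨g, hg⟩ := (Submodule.mem_span_range_iff_exists_fun A).mp hp
        obtain ⟨h, hh⟩ := (Submodule.mem_span_range_iff_exists_fun A).mp hq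
        refine ⟨fun a b => h a * g b, ?_⟩
        rw [← hg, ← hh, Finset.sum_mul_sum]
        simp only [smul_eq_mul]
        rw [Finset.sum_comm]
        refine Finset.sum_congr rfl fun a _ => Finset.sum_congr rfl fun b _ => by ring
      · rintro x y ⟨dx, hx⟩ ⟨dy, hy⟩
        exact ⟨fun a b => dx a b + dy a b, by
          simp only [hx, hy, add_mul, Finset.sum_add_distrib]⟩
    set g : Fin ℓ → A := fun a => f a - ∑ b, d a b * J b with hgdef
    have hcyc : ∑ b, g b * J b = 0 := by
      have : ∑ b, g b * J b = (∑ b, f b * J b) - ∑ b, (∑ c, d b c * J c) * J b := by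
        simp only [g, sub_mul, Finset.sum_sub_distrib]
      rw [this, hd]
      rw [sub_eq_zero]
      refine Finset.sum_congr rfl fun b _ => ?_
      rw [Finset.sum_mul]
    set F : (Fin 1 → Fin ℓ) → A := fun v => g (v 0) with hFdef
    have hFalt : IsAltTensor ℓ 1 F := by
      constructor
      · intro v hv
        exact absurd (fun i j _ => Subsingleton.elim i j) hv
      · intro v σ
        have hσ : σ = 1 := Subsingleton.elim σ 1
        subst hσ
        simp
    have hFcyc : ∀ v : Fin 0 → Fin ℓ, ∑ b, J b * F (Fin.cons b v) = 0 := by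
      intro v
      have : ∀ b : Fin ℓ, F (Fin.cons b v) = g b := fun b => by
        simp [F, Fin.cons_zero]
      simp only [this]
      rw [← hcyc]
      exact Finset.sum_congr rfl fun b _ => mul_comm _ _
    obtain ⟨G, -, hG⟩ := hacyclic 0 F hFalt hFcyc
    have hga : g a ∈ I := by
      have := hG (fun _ => a)
      have hFa : F (fun _ => a) = g a := rfl
      rw [hFa] at this
      rw [this]
      exact Ideal.sum_mem _ fun b _ => Ideal.mul_mem_right _ _ (hJmem b)
    have : f a = g a + ∑ b, d a b * J b := by simp [g]
    rw [this]
    exact Ideal.add_mem _ hga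
      (Ideal.sum_mem _ fun b _ => Ideal.mul_mem_left _ _ (hJmem b))
  · intro x hx
    obtain ⟨c, hc⟩ := (Submodule.mem_span_range_iff_exists_fun A).mp hx
    exact ⟨c, by rw [← hc]; exact Finset.sum_congr rfl fun a _ => (smul_eq_mul _ _).symm⟩
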